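/- Let ε ∈ (0, 1), η ∈ (0, 1/2) and p ∈ ℕ. Let A be a random m × n real matrix and B be a random n × N real matrix, defined on a common probability space and independent of each other, such that A is a (p, ε/3, η/4)-Johnson–Lindenstrauss embedding and B is a (p, ε/3, η/4)-Johnson–Lindenstrauss embedding. Then the random m × N matrix AB is a (p, ε, η)-Johnson–Lindenstrauss embedding. -/

import Mathlib

open MeasureTheory ProbabilityTheory

noncomputable section

/-- A measurable-space structure on matrices, inherited from the product σ-algebra. -/
instance matrixMeasurableSpace {m n α : Type*} [MeasurableSpace α] :
    MeasurableSpace (Matrix m n α) :=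
  (inferInstance : MeasurableSpace (m → n → α))

/-- The squared Euclidean norm ‖x‖₂² of a vector `x ∈ ℝ^d`. -/
def sqNorm {d : ℕ} (x : Fin d → ℝ) : ℝ := ∑ i, x i ^ 2

/-- A random matrix `A ∈ ℝ^{m×N}` is a `(p, ε, η)`-Johnson–Lindenstrauss embedding if for every
set `E ⊆ ℝ^N` of cardinality `p`, with probability at least `1 - η` one has
`(1 - ε)‖x‖₂² ≤ ‖Ax‖₂² ≤ (1 + ε)‖x‖₂²` simultaneously for all `x ∈ E`. -/
def IsJLE {Ω : Type*} [MeasurableSpace Ω] (μ : Measure Ω) {m N : ℕ}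
    (A : Ω → Matrix (Fin m) (Fin N) ℝ) (p : ℕ) (ε η : ℝ) : Prop :=
  ∀ E : Finset (Fin N → ℝ), E.card = p →
    1 - η ≤ (μ {ω | ∀ x ∈ E,
      (1 - ε) * sqNorm x ≤ sqNorm ((A ω).mulVec x) ∧
      sqNorm ((A ω).mulVec x) ≤ (1 + ε) * sqNorm x}).toReal

lemma sqNorm_nonneg' {d : ℕ} (x : Fin d → ℝ) : 0 ≤ sqNorm x :=
  Finset.sum_nonneg fun i _ => sq_nonneg (x i)

lemma measurable_mulVec' {α : Type*} [MeasurableSpace α] {d e : ℕ}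
    {f : α → Matrix (Fin d) (Fin e) ℝ} {g : α → Fin e → ℝ}
    (hf : Measurable f) (hg : Measurable g) :
    Measurable fun ω => (f ω).mulVec (g ω) := by
  apply measurable_pi_lambda
  intro i
  simp only [Matrix.mulVec, dotProduct]
  apply Finset.measurable_sum
  intro j _
  exact ((measurable_pi_apply j).comp ((measurable_pi_apply i).comp hf)).mul
    ((measurable_pi_apply j).comp hg)

lemma measurable_sqNorm' {α : Type*} [MeasurableSpace α] {d : ℕ}
    {f : α → Fin d → ℝ} (hf : Measurable f) :
    Measurable fun ω => sqNorm (f ω) := by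
  simp only [sqNorm]
  exact Finset.measurable_sum _ fun i _ => ((measurable_pi_apply i).comp hf).pow_const 2

/-- The composition of two independent Johnson-Lindenstrauss embeddings
`A` and `B` is again a Johnson-Lindenstrauss embedding. -/
theorem composition_of_JLE {Ω : Type*} [MeasurableSpace Ω] (μ : Measure Ω)
    [IsProbabilityMeasure μ] {m n N p : ℕ} {ε η : ℝ}
    (hε : ε ∈ Set.Ioo (0 : ℝ) 1) (hη : η ∈ Set.Ioo (0 : ℝ) (1/2))
    (A : Ω → Matrix (Fin m) (Fin n) ℝ) (B : Ω → Matrix (Fin n) (Fin N) ℝ)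
    (hAmeas : Measurable A) (hBmeas : Measurable B)
    (hindep : IndepFun A B μ)
    (hA : IsJLE μ A p (ε / 3) (η / 4)) (hB : IsJLE μ B p (ε / 3) (η / 4)) :
    IsJLE μ (fun ω => A ω * B ω) p ε η := by
  obtain ⟨hε0, hε1⟩ := hε
  obtain ⟨hη0, hη1⟩ := hη
  intro E hE
  by_cases hn : n = 0
  · subst hn
    by_cases hx : ∀ x ∈ E, sqNorm x = 0
    · have hset : {ω | ∀ x ∈ E,
          (1 - ε) * sqNorm x ≤ sqNorm (((fun ω => A ω * B ω) ω).mulVec x) ∧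
          sqNorm (((fun ω => A ω * B ω) ω).mulVec x) ≤ (1 + ε) * sqNorm x} = Set.univ := by
        ext ω
        simp only [Set.mem_setOf_eq, Set.mem_univ, iff_true]
        intro x hxE
        have hx0 : x = 0 := by
          funext i
          have h := hx x hxE
          have := (Finset.sum_eq_zero_iff_of_nonneg
            (fun i _ => sq_nonneg (x i))).mp h i (Finset.mem_univ i)
          exact (pow_eq_zero_iff two_ne_zero).mp this
        subst hx0
        simp [sqNorm, Matrix.mulVec_zero]
      rw [hset]
      simp only [measure_univ, ENNReal.toReal_one]
      linarith
    · push_neg at hx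
      obtain ⟨x, hxE, hx0⟩ := hx
      have hxpos : 0 < sqNorm x := lt_of_le_of_ne (sqNorm_nonneg' x) (Ne.symm hx0)
      have hB' := hB E hE
      have hempty : {ω | ∀ y ∈ E,
          (1 - ε / 3) * sqNorm y ≤ sqNorm ((B ω).mulVec y) ∧
          sqNorm ((B ω).mulVec y) ≤ (1 + ε / 3) * sqNorm y} = (∅ : Set Ω) := by
        ext ω
        simp only [Set.mem_setOf_eq, Set.mem_empty_iff_false, iff_false, not_forall]
        refine ⟨x, ⟨hxE, ?_⟩⟩
        intro h
        have h0 : sqNorm ((B ω).mulVec x) = 0 := by simp [sqNorm]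
        nlinarith [h.1]
      rw [hempty] at hB'
      simp only [measure_empty, ENNReal.toReal_zero] at hB'
      linarith
  · haveI : Infinite (Fin n → ℝ) := by
      have hne : Nonempty (Fin n) := ⟨⟨0, Nat.pos_of_ne_zero hn⟩⟩
      exact Infinite.of_injective (fun r : ℝ => Function.const (Fin n) r)
        (fun a b hab => congrFun hab hne.some)
    set νA := μ.map A with hνA
    set νB := μ.map B with hνB
    haveI : IsProbabilityMeasure νA := Measure.isProbabilityMeasure_map hAmeas.aemeasurable
    haveI : IsProbabilityMeasure νB := Measure.isProbabilityMeasure_map hBmeas.aemeasurable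
    set c : ENNReal := ENNReal.ofReal (1 - η / 4) with hc
    -- the "good" event for B
    set SB : Set (Matrix (Fin n) (Fin N) ℝ) := {b | ∀ x ∈ E,
        (1 - ε / 3) * sqNorm x ≤ sqNorm (b.mulVec x) ∧
        sqNorm (b.mulVec x) ≤ (1 + ε / 3) * sqNorm x} with hSB
    have hSBmeas : MeasurableSet SB := by
      have : SB = ⋂ x ∈ E, ({b : Matrix (Fin n) (Fin N) ℝ |
          (1 - ε / 3) * sqNorm x ≤ sqNorm (b.mulVec x)} ∩
          {b | sqNorm (b.mulVec x) ≤ (1 + ε / 3) * sqNorm x}) := by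
        ext b; simp [hSB, forall_and]
      rw [this]
      refine MeasurableSet.biInter E.countable_toSet fun x _ => ?_
      have hm : Measurable fun b : Matrix (Fin n) (Fin N) ℝ => sqNorm (b.mulVec x) :=
        measurable_sqNorm' (measurable_mulVec' measurable_id measurable_const)
      exact (measurableSet_le measurable_const hm).inter (measurableSet_le hm measurable_const)
    -- the "good" event for A relative to B
    set T : Set (Matrix (Fin m) (Fin n) ℝ × Matrix (Fin n) (Fin N) ℝ) := {q | ∀ x ∈ E,
        (1 - ε / 3) * sqNorm (q.2.mulVec x) ≤ sqNorm (q.1.mulVec (q.2.mulVec x)) ∧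
        sqNorm (q.1.mulVec (q.2.mulVec x)) ≤ (1 + ε / 3) * sqNorm (q.2.mulVec x)} with hT
    have hTmeas : MeasurableSet T := by
      have : T = ⋂ x ∈ E, ({q : Matrix (Fin m) (Fin n) ℝ × Matrix (Fin n) (Fin N) ℝ |
          (1 - ε / 3) * sqNorm (q.2.mulVec x) ≤ sqNorm (q.1.mulVec (q.2.mulVec x))} ∩
          {q | sqNorm (q.1.mulVec (q.2.mulVec x)) ≤ (1 + ε / 3) * sqNorm (q.2.mulVec x)}) := by
        ext q; simp [hT, forall_and]
      rw [this]
      refine MeasurableSet.biInter E.countable_toSet fun x _ => ?_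
      have hm1 : Measurable fun q : Matrix (Fin m) (Fin n) ℝ × Matrix (Fin n) (Fin N) ℝ =>
          sqNorm (q.2.mulVec x) :=
        measurable_sqNorm' (measurable_mulVec' measurable_snd measurable_const)
      have hm2 : Measurable fun q : Matrix (Fin m) (Fin n) ℝ × Matrix (Fin n) (Fin N) ℝ =>
          sqNorm (q.1.mulVec (q.2.mulVec x)) :=
        measurable_sqNorm' (measurable_mulVec' measurable_fst
          (measurable_mulVec' measurable_snd measurable_const))
      exact ((measurableSet_le (hm1.const_mul _) hm2)).inter
        (measurableSet_le hm2 (hm1.const_mul _))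
    set GB : Set Ω := B ⁻¹' SB with hGB
    set GT : Set Ω := (fun ω => (A ω, B ω)) ⁻¹' T with hGT
    have hGBmeas : MeasurableSet GB := hBmeas hSBmeas
    have hGTmeas : MeasurableSet GT := (hAmeas.prodMk hBmeas) hTmeas
    -- bound on μ GB
    have h1 : c ≤ μ GB := by
      have := hB E hE
      rw [hc]
      rw [ENNReal.ofReal_le_iff_le_toReal (measure_ne_top μ GB)]
      exact this
    -- bound on μ GT via independence and Fubini
    have h2 : c ≤ μ GT := by
      have hmap : μ GT = (νA.prod νB) T := by
        rw [hGT, ← Measure.map_apply (hAmeas.prodMk hBmeas) hTmeas,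
          (indepFun_iff_map_prod_eq_prod_map_map hAmeas.aemeasurable
            hBmeas.aemeasurable).mp hindep]
      rw [hmap, Measure.prod_apply_symm hTmeas]
      have hsec : ∀ b : Matrix (Fin n) (Fin N) ℝ, c ≤ νA ((fun a => (a, b)) ⁻¹' T) := by
        intro b
        obtain ⟨P, hPsub, hPcard⟩ := Infinite.exists_superset_card_eq
          (E.image b.mulVec) p (le_trans Finset.card_image_le hE.le)
        have hA' := hA P hPcard
        have hsub : {ω | ∀ y ∈ P,
            (1 - ε / 3) * sqNorm y ≤ sqNorm ((A ω).mulVec y) ∧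
            sqNorm ((A ω).mulVec y) ≤ (1 + ε / 3) * sqNorm y} ⊆
            A ⁻¹' ((fun a => (a, b)) ⁻¹' T) := by
          intro ω hω
          simp only [Set.mem_preimage, hT, Set.mem_setOf_eq]
          intro x hxE
          exact hω (b.mulVec x) (hPsub (Finset.mem_image_of_mem _ hxE))
        have hsecmeas : MeasurableSet ((fun a => (a, b)) ⁻¹' T) :=
          measurable_prodMk_right hTmeas
        rw [hνA, Measure.map_apply hAmeas hsecmeas]
        calc c ≤ μ {ω | ∀ y ∈ P,
              (1 - ε / 3) * sqNorm y ≤ sqNorm ((A ω).mulVec y) ∧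
              sqNorm ((A ω).mulVec y) ≤ (1 + ε / 3) * sqNorm y} := by
              rw [hc, ENNReal.ofReal_le_iff_le_toReal (measure_ne_top μ _)]
              exact hA'
          _ ≤ μ (A ⁻¹' ((fun a => (a, b)) ⁻¹' T)) := measure_mono hsub
      calc c = ∫⁻ _, c ∂νB := by simp
        _ ≤ ∫⁻ b, νA ((fun a => (a, b)) ⁻¹' T) ∂νB := lintegral_mono fun b => hsec b
    -- inclusion of events
    have hincl : GB ∩ GT ⊆ {ω | ∀ x ∈ E,
        (1 - ε) * sqNorm x ≤ sqNorm (((fun ω => A ω * B ω) ω).mulVec x) ∧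
        sqNorm (((fun ω => A ω * B ω) ω).mulVec x) ≤ (1 + ε) * sqNorm x} := by
      rintro ω ⟨hb, ht⟩
      intro x hxE
      have hb' := hb x hxE
      have ht' := ht x hxE
      have hkey : ((fun ω => A ω * B ω) ω).mulVec x = (A ω).mulVec ((B ω).mulVec x) := by
        simp [Matrix.mulVec_mulVec]
      rw [hkey]
      have h0x := sqNorm_nonneg' x
      have h0bx := sqNorm_nonneg' ((B ω).mulVec x)
      constructor
      · nlinarith [hb'.1, ht'.1]
      · nlinarith [hb'.2, ht'.2]
    -- measure arithmetic
    have hsum : μ (GB ∪ GT) + μ (GB ∩ GT) = μ GB + μ GT :=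
      measure_union_add_inter GB hGTmeas
    have hfin : ENNReal.ofReal (1 - η) ≤ μ (GB ∩ GT) := by
      have hle : ENNReal.ofReal (1 - η) + 1 ≤ 1 + μ (GB ∩ GT) := by
        calc ENNReal.ofReal (1 - η) + 1 = ENNReal.ofReal ((1 - η) + 1) := by
              rw [ENNReal.ofReal_add (by linarith) zero_le_one, ENNReal.ofReal_one]
          _ ≤ ENNReal.ofReal ((1 - η / 4) + (1 - η / 4)) := by
              apply ENNReal.ofReal_le_ofReal; linarith
          _ = c + c := by
              rw [ENNReal.ofReal_add (by linarith) (by linarith)]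
          _ ≤ μ GB + μ GT := add_le_add h1 h2
          _ = μ (GB ∪ GT) + μ (GB ∩ GT) := hsum.symm
          _ ≤ 1 + μ (GB ∩ GT) := by
              exact add_le_add prob_le_one le_rfl
      have hle' : 1 + ENNReal.ofReal (1 - η) ≤ 1 + μ (GB ∩ GT) :=
        le_trans (le_of_eq (add_comm _ _)) hle
      exact (ENNReal.add_le_add_iff_left (by simp : (1 : ENNReal) ≠ ⊤)).mp hle'
    have hfinal : ENNReal.ofReal (1 - η) ≤ μ {ω | ∀ x ∈ E,
        (1 - ε) * sqNorm x ≤ sqNorm (((fun ω => A ω * B ω) ω).mulVec x) ∧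
        sqNorm (((fun ω => A ω * B ω) ω).mulVec x) ≤ (1 + ε) * sqNorm x} :=
      le_trans hfin (measure_mono hincl)
    exact (ENNReal.ofReal_le_iff_le_toReal (measure_ne_top μ _)).mp hfinal
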